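/- There exists a universal constant C > 0 such that for every integer t ≥ 1 and every real x with |x| ≤ t, the normalized Hermite polynomial satisfies |h_t(x)| ≤ (C · t)^{t/2}. -/

import Mathlib

open MeasureTheory ProbabilityTheory

/-- The standard Gaussian distribution `N(0, I_d)` on `ℝ^d`. -/
noncomputable def stdGaussian (d : ℕ) : Measure (Fin d → ℝ) :=
  Measure.pi fun _ => gaussianReal 0 1

/-- The spherical Gaussian distribution `N(μ, I_d)` on `ℝ^d`. -/
noncomputable def gaussianPi {d : ℕ} (μ : Fin d → ℝ) : Measure (Fin d → ℝ) :=
  Measure.pi fun i => gaussianReal (μ i) 1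

/-- The `k`-th normalized probabilist's Hermite polynomial `h_k = He_k / √(k!)`. -/
noncomputable def hermitePoly (k : ℕ) (x : ℝ) : ℝ :=
  Polynomial.aeval x (Polynomial.hermite k) / Real.sqrt k.factorial

/-- The normalized Hermite tensor `H_k(x) ∈ (ℝ^d)^{⊗k}`: the sum over partitions of
`[k]` into sets of size 1 and 2 (encoded as involutions `π` of `Fin k`: the pairs are
the 2-cycles, the singletons are the fixed points) of the product of `-δ_{i_a, i_b}`
over the pairs and `x_{i_c}` over the singletons, normalized by `1/√(k!)`. -/
noncomputable def hermiteTensor (d k : ℕ) (x : Fin d → ℝ) : (Fin k → Fin d) → ℝ :=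
  fun i => (Real.sqrt k.factorial)⁻¹ *
    ∑ π : Fin k → Fin k,
      if ∀ a, π (π a) = a then
        (-1 : ℝ) ^ ((Finset.univ.filter fun a => π a ≠ a).card / 2) *
        (∏ a ∈ Finset.univ.filter fun a => π a ≠ a,
            if i a = i (π a) then (1 : ℝ) else 0) *
        ∏ a ∈ Finset.univ.filter fun a => π a = a, x (i a)
      else 0

/-- The extended Hermite tensor `H_n(x, y) = Re((x + i y)^{⊗n}) / √(n!)`. -/
noncomputable def extHermiteTensor (d n : ℕ) (x y : Fin d → ℝ) : (Fin n → Fin d) → ℝ :=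
  fun i => (∏ j, ((x (i j) : ℂ) + Complex.I * (y (i j) : ℂ))).re / Real.sqrt n.factorial

/-- Entrywise inner product of two order-`k`, dimension-`d` tensors. -/
noncomputable def tinner {d k : ℕ} (A B : (Fin k → Fin d) → ℝ) : ℝ :=
  ∑ i : Fin k → Fin d, A i * B i

open Polynomial Finset Nat
open scoped Nat

lemma choose_le_two_pow' (t i : ℕ) : t.choose i ≤ 2 ^ t := by
  rcases le_or_gt i t with h | h
  · calc t.choose i ≤ ∑ k ∈ range (t+1), t.choose k :=
        Finset.single_le_sum (fun k _ => Nat.zero_le _) (by simp [Nat.lt_succ_iff, h])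
    _ = 2 ^ t := Nat.sum_range_choose t
  · simp [Nat.choose_eq_zero_of_lt h]

lemma term_bound (t i : ℕ) (ht : 1 ≤ t) (hi : i ≤ t) :
    (t - i - 1)‼ * t.choose i * t ^ i ≤ 2 ^ t * t ^ t := by
  have h1 : (t - i - 1)‼ ≤ t ^ (t - i) := by
    calc (t - i - 1)‼ ≤ (t - i - 1)! := Nat.doubleFactorial_le_factorial _
    _ ≤ (t - i - 1) ^ (t - i - 1) := Nat.factorial_le_pow _
    _ ≤ t ^ (t - i - 1) := Nat.pow_le_pow_left (by omega) _
    _ ≤ t ^ (t - i) := Nat.pow_le_pow_right ht (by omega)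
  calc (t - i - 1)‼ * t.choose i * t ^ i
      ≤ t ^ (t - i) * 2 ^ t * t ^ i :=
        Nat.mul_le_mul (Nat.mul_le_mul h1 (choose_le_two_pow' t i)) le_rfl
    _ = 2 ^ t * t ^ t := by
        rw [mul_comm (t ^ (t-i)) (2^t), mul_assoc, ← pow_add]
        rw [Nat.sub_add_cancel hi]

lemma He_bound (t : ℕ) (ht : 1 ≤ t) (x : ℝ) (hx : |x| ≤ t) :
    |(Polynomial.aeval x (Polynomial.hermite t) : ℝ)| ≤ 4 ^ t * (t:ℝ) ^ t := by
  have hdeg : (Polynomial.hermite t).natDegree = t := Polynomial.natDegree_hermite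
  rw [Polynomial.aeval_eq_sum_range (R := ℤ), hdeg]
  have key : ∀ i ∈ range (t+1),
      |((Polynomial.hermite t).coeff i • x ^ i : ℝ)| ≤ 2 ^ t * (t:ℝ) ^ t := by
    intro i hi
    rw [Finset.mem_range, Nat.lt_succ_iff] at hi
    rw [zsmul_eq_mul, abs_mul, abs_pow]
    have hc : |((Polynomial.hermite t).coeff i : ℝ)| ≤ ((t - i - 1)‼ * t.choose i : ℕ) := by
      rw [Polynomial.coeff_hermite]
      split_ifs with h
      · push_cast
        rw [abs_mul, abs_mul, abs_pow, abs_neg, abs_one, one_pow, one_mul,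
          Nat.abs_cast, Nat.abs_cast]
      · simp; positivity
    have hxi : |x| ^ i ≤ (t:ℝ) ^ i := by
      apply pow_le_pow_left₀ (abs_nonneg x) hx
    calc |((Polynomial.hermite t).coeff i : ℝ)| * |x| ^ i
        ≤ ((t - i - 1)‼ * t.choose i : ℕ) * (t:ℝ) ^ i := by
          apply mul_le_mul hc hxi (by positivity) (by positivity)
      _ = (((t - i - 1)‼ * t.choose i * t ^ i : ℕ) : ℝ) := by push_cast; ring
      _ ≤ ((2 ^ t * t ^ t : ℕ) : ℝ) := by exact_mod_cast term_bound t i ht hi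
      _ = 2 ^ t * (t:ℝ) ^ t := by push_cast; ring
  calc |∑ i ∈ range (t+1), (Polynomial.hermite t).coeff i • x ^ i|
      ≤ ∑ i ∈ range (t+1), |((Polynomial.hermite t).coeff i • x ^ i : ℝ)| :=
        Finset.abs_sum_le_sum_abs _ _
    _ ≤ ∑ _i ∈ range (t+1), 2 ^ t * (t:ℝ) ^ t := Finset.sum_le_sum key
    _ = (t+1) * (2 ^ t * (t:ℝ) ^ t) := by rw [Finset.sum_const, card_range]; push_cast; ring
    _ ≤ 2 ^ t * (2 ^ t * (t:ℝ) ^ t) := by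
        apply mul_le_mul_of_nonneg_right _ (by positivity)
        exact_mod_cast Nat.lt_two_pow_self (n := t)
    _ = 4 ^ t * (t:ℝ) ^ t := by ring_nf; rw [show (4:ℝ) = 2*2 by norm_num, mul_pow]; ring

lemma pow_le_factorial_mul_exp (t : ℕ) : (t:ℝ) ^ t ≤ (t.factorial : ℝ) * Real.exp 1 ^ t := by
  have h := Real.sum_le_exp_of_nonneg (x := (t:ℝ)) (Nat.cast_nonneg t) (t+1)
  have h2 : (t:ℝ) ^ t / t.factorial ≤ ∑ i ∈ range (t+1), (t:ℝ) ^ i / i.factorial :=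
    Finset.single_le_sum (f := fun i => (t:ℝ) ^ i / i.factorial)
      (fun i _ => by positivity) (by simp)
  have h3 : (t:ℝ) ^ t / t.factorial ≤ Real.exp 1 ^ t := by
    rw [Real.exp_one_pow]
    exact h2.trans h
  have hf : (0:ℝ) < t.factorial := by exact_mod_cast t.factorial_pos
  calc (t:ℝ) ^ t = (t:ℝ) ^ t / t.factorial * t.factorial := by field_simp
  _ ≤ Real.exp 1 ^ t * t.factorial := by
      apply mul_le_mul_of_nonneg_right h3 hf.le
  _ = (t.factorial : ℝ) * Real.exp 1 ^ t := by ring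

theorem abs_hermitePoly_le_of_abs_le' :
    ∃ C : ℝ, 0 < C ∧
      ∀ (t : ℕ), 1 ≤ t → ∀ x : ℝ, |x| ≤ (t : ℝ) →
        |Polynomial.aeval x (Polynomial.hermite t) / Real.sqrt t.factorial|
          ≤ (C * t) ^ ((t : ℝ) / 2) := by
  refine ⟨50, by norm_num, fun t ht x hx => ?_⟩
  have htpos : (0:ℝ) < t := by exact_mod_cast ht
  have hf : (0:ℝ) < t.factorial := by exact_mod_cast t.factorial_pos
  have hst : (0:ℝ) < Real.sqrt t.factorial := Real.sqrt_pos.mpr hf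
  have hbase : (0:ℝ) ≤ 50 * t := by positivity
  have hrpow : ((50:ℝ) * t) ^ ((t:ℝ) / 2) = Real.sqrt ((50 * (t:ℝ)) ^ t) := by
    rw [Real.sqrt_eq_rpow, ← Real.rpow_natCast (50 * (t:ℝ)) t, ← Real.rpow_mul hbase]
    congr 1
    ring
  rw [abs_div, abs_of_pos hst, hrpow, div_le_iff₀ hst, ← Real.sqrt_mul (by positivity)]
  have key : (4:ℝ) ^ t * (t:ℝ) ^ t ≤ Real.sqrt ((50 * (t:ℝ)) ^ t * t.factorial) := by
    rw [Real.le_sqrt (by positivity) (by positivity)]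
    have hexp : Real.exp 1 ≤ 2.7182818286 := (Real.exp_one_lt_d9).le
    have h16 : ((4:ℝ) ^ t) ^ 2 = 16 ^ t := by
      rw [← pow_mul, mul_comm, pow_mul]; norm_num
    calc ((4:ℝ) ^ t * (t:ℝ) ^ t) ^ 2 = 16 ^ t * ((t:ℝ) ^ t * (t:ℝ) ^ t) := by
          rw [mul_pow, h16]; ring
      _ ≤ 16 ^ t * ((t.factorial * Real.exp 1 ^ t) * (t:ℝ) ^ t) := by
          apply mul_le_mul_of_nonneg_left _ (by positivity)
          exact mul_le_mul_of_nonneg_right (pow_le_factorial_mul_exp t) (by positivity)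
      _ = (16 * Real.exp 1) ^ t * ((t:ℝ) ^ t * t.factorial) := by
          rw [mul_pow]; ring
      _ ≤ 50 ^ t * ((t:ℝ) ^ t * t.factorial) := by
          apply mul_le_mul_of_nonneg_right _ (by positivity)
          apply pow_le_pow_left₀ (by positivity) (by nlinarith)
      _ = (50 * (t:ℝ)) ^ t * t.factorial := by rw [mul_pow]; ring
  exact le_trans (He_bound t ht x hx) key

/-- There is a universal constant `C > 0` such that for every `t ≥ 1` and every
real `x` with `|x| ≤ t`, the normalized Hermite polynomial satisfies
`|h_t(x)| ≤ (C·t)^{t/2}`. -/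
theorem abs_hermitePoly_le_of_abs_le :
    ∃ C : ℝ, 0 < C ∧
      ∀ (t : ℕ), 1 ≤ t → ∀ x : ℝ, |x| ≤ (t : ℝ) →
        |hermitePoly t x| ≤ (C * t) ^ ((t : ℝ) / 2) := by
  obtain ⟨C, hC, h⟩ := abs_hermitePoly_le_of_abs_le'
  exact ⟨C, hC, fun t ht x hx => by simpa [hermitePoly] using h t ht x hx⟩
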